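/- arXiv:1910.09820 — 3 statements merged into one kernel-verified Lean document; each statement's English description precedes it below -/
import Mathlib

section
/- Let n ≥ 2 be an integer and t₁ > 1. Suppose m : [1,∞) → ℝ is a continuous function satisfying −m(t) − (1/(n-1)) ∫₁ᵗ m(s)² ds ≥ 2 for all t ≥ t₁. Define the sequence t_ℓ by t_{ℓ+1} = t_ℓ + (n-1)·2^{1−ℓ} for ℓ ≥ 1. Then for every integer ℓ ≥ 1, −m(t) ≥ 2^ℓ for all t ≥ t_ℓ. -/
/-- **Blow-up iteration.** If a continuous `m : [1,∞) → ℝ` satisfies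
`-m(t) - (1/(n-1)) ∫₁ᵗ m(s)² ds ≥ 2` for all `t ≥ t₁ > 1`, and
`t_{ℓ+1} = t_ℓ + (n-1)·2^{1-ℓ}`, then `-m(t) ≥ 2^ℓ` for all `t ≥ t_ℓ`. -/
theorem riccati_blowup_iteration
    (n : ℕ) (hn : 2 ≤ n) (t₁ : ℝ) (ht₁ : 1 < t₁)
    (m : ℝ → ℝ) (hm : ContinuousOn m (Set.Ici 1))
    (hineq : ∀ t ≥ t₁,
      2 ≤ -m t - (1 / ((n : ℝ) - 1)) * ∫ s in (1:ℝ)..t, (m s) ^ 2)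
    (tseq : ℕ → ℝ) (htseq₁ : tseq 1 = t₁)
    (htseq : ∀ ℓ : ℕ, 1 ≤ ℓ →
      tseq (ℓ + 1) = tseq ℓ + ((n : ℝ) - 1) * (2 : ℝ) ^ ((1 : ℤ) - (ℓ : ℤ))) :
    ∀ ℓ : ℕ, 1 ≤ ℓ → ∀ t ≥ tseq ℓ, (2 : ℝ) ^ ℓ ≤ -m t := by
  have hn1 : (0:ℝ) < (n:ℝ) - 1 := by
    have : (2:ℝ) ≤ (n:ℝ) := by exact_mod_cast hn
    linarith
  -- m^2 is interval integrable on subintervals of [1,∞)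
  have hint : ∀ a b : ℝ, 1 ≤ a → 1 ≤ b →
      IntervalIntegrable (fun s => (m s) ^ 2) MeasureTheory.volume a b := by
    intro a b ha hb
    apply ContinuousOn.intervalIntegrable
    apply (hm.mono ?_).pow
    intro x hx
    rw [Set.mem_uIcc] at hx
    rcases hx with ⟨h1, _⟩ | ⟨h1, _⟩ <;> exact Set.mem_Ici.mpr (by linarith)
  have hge : ∀ ℓ : ℕ, 1 ≤ ℓ → t₁ ≤ tseq ℓ := by
    intro ℓ hℓ
    induction ℓ, hℓ using Nat.le_induction with
    | base => rw [htseq₁]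
    | succ k hk ih =>
      rw [htseq k hk]
      have : (0:ℝ) < (2:ℝ) ^ ((1:ℤ) - (k:ℤ)) := zpow_pos (by norm_num) _
      nlinarith
  intro ℓ hℓ
  induction ℓ, hℓ using Nat.le_induction with
  | base =>
    intro t ht
    rw [htseq₁] at ht
    have h1t : (1:ℝ) ≤ t := le_of_lt (lt_of_lt_of_le ht₁ ht)
    have hI : 0 ≤ ∫ s in (1:ℝ)..t, (m s) ^ 2 :=
      intervalIntegral.integral_nonneg h1t (fun s _ => sq_nonneg _)
    have := hineq t ht
    have hc : 0 ≤ (1 / ((n:ℝ) - 1)) * ∫ s in (1:ℝ)..t, (m s) ^ 2 :=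
      mul_nonneg (by positivity) hI
    norm_num
    linarith
  | succ ℓ hℓ ih =>
    intro t ht
    have hstep : tseq (ℓ+1) = tseq ℓ + ((n:ℝ) - 1) * (2:ℝ) ^ ((1:ℤ) - (ℓ:ℤ)) :=
      htseq ℓ hℓ
    have ha1 : t₁ ≤ tseq ℓ := hge ℓ hℓ
    have hpow : (0:ℝ) < (2:ℝ) ^ ((1:ℤ) - (ℓ:ℤ)) := zpow_pos (by norm_num) _
    have hat : tseq ℓ ≤ t := by
      rw [hstep] at ht; nlinarith
    have h1a : (1:ℝ) ≤ tseq ℓ := le_of_lt (lt_of_lt_of_le ht₁ ha1)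
    have h1t : (1:ℝ) ≤ t := le_trans h1a hat
    have ht₁t : t₁ ≤ t := le_trans ha1 hat
    -- split the integral
    have hsplit : (∫ s in (1:ℝ)..t, (m s) ^ 2)
        = (∫ s in (1:ℝ)..(tseq ℓ), (m s) ^ 2) + ∫ s in (tseq ℓ)..t, (m s) ^ 2 :=
      (intervalIntegral.integral_add_adjacent_intervals
        (hint 1 (tseq ℓ) le_rfl h1a) (hint (tseq ℓ) t h1a h1t)).symm
    have hI1 : 0 ≤ ∫ s in (1:ℝ)..(tseq ℓ), (m s) ^ 2 :=
      intervalIntegral.integral_nonneg h1a (fun s _ => sq_nonneg _)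
    -- lower bound on the integral over [tseq ℓ, t]
    have hlow : (t - tseq ℓ) * ((2:ℝ)^ℓ)^2 ≤ ∫ s in (tseq ℓ)..t, (m s) ^ 2 := by
      have hconst : (∫ _s in (tseq ℓ)..t, ((2:ℝ)^ℓ)^2)
          = (t - tseq ℓ) * ((2:ℝ)^ℓ)^2 := by
        rw [intervalIntegral.integral_const, smul_eq_mul]
      rw [← hconst]
      apply intervalIntegral.integral_mono_on hat
        intervalIntegrable_const (hint (tseq ℓ) t h1a h1t)
      intro s hs
      have hms : (2:ℝ)^ℓ ≤ -m s := ih s hs.1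
      nlinarith [pow_pos (by norm_num : (0:ℝ) < 2) ℓ]
    -- combine
    have hmain := hineq t ht₁t
    rw [hsplit] at hmain
    have hbound : ((n:ℝ) - 1) * (2:ℝ) ^ ((1:ℤ) - (ℓ:ℤ)) * ((2:ℝ)^ℓ)^2
        ≤ (t - tseq ℓ) * ((2:ℝ)^ℓ)^2 := by
      have : ((n:ℝ) - 1) * (2:ℝ) ^ ((1:ℤ) - (ℓ:ℤ)) ≤ t - tseq ℓ := by
        rw [hstep] at ht; linarith
      nlinarith [pow_pos (by norm_num : (0:ℝ) < 2) ℓ]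
    have hkey : ((n:ℝ) - 1) * (2:ℝ) ^ ((1:ℤ) - (ℓ:ℤ)) * ((2:ℝ)^ℓ)^2
        = ((n:ℝ) - 1) * (2:ℝ)^(ℓ+1) := by
      have h2 : ((2:ℝ)^ℓ)^2 = (2:ℝ)^((2*ℓ:ℕ):ℤ) := by
        rw [← pow_mul, zpow_natCast]; ring_nf
      rw [h2, mul_assoc, ← zpow_add₀ (by norm_num : (2:ℝ) ≠ 0)]
      have : (1:ℤ) - (ℓ:ℤ) + ((2*ℓ:ℕ):ℤ) = ((ℓ+1 : ℕ):ℤ) := by push_cast; ring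
      rw [this, zpow_natCast]
    rw [hkey] at hbound
    have hfin : (1 / ((n:ℝ) - 1)) * (((n:ℝ) - 1) * (2:ℝ)^(ℓ+1)) = (2:ℝ)^(ℓ+1) := by
      field_simp
    have hIlow : ((n:ℝ) - 1) * (2:ℝ)^(ℓ+1)
        ≤ (∫ s in (1:ℝ)..(tseq ℓ), (m s) ^ 2) + ∫ s in (tseq ℓ)..t, (m s) ^ 2 := by
      linarith
    have hmul : (1 / ((n:ℝ) - 1)) * (((n:ℝ) - 1) * (2:ℝ)^(ℓ+1))
        ≤ (1 / ((n:ℝ) - 1)) * ((∫ s in (1:ℝ)..(tseq ℓ), (m s) ^ 2)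
            + ∫ s in (tseq ℓ)..t, (m s) ^ 2) :=
      mul_le_mul_of_nonneg_left hIlow (by positivity)
    rw [hfin] at hmul
    linarith
end

section
/- Let n ≥ 2 be an integer and t₁ > 1. There is no continuous function m : [1,∞) → ℝ satisfying −m(t) − (1/(n-1)) ∫₁ᵗ m(s)² ds ≥ 2 for all t ≥ t₁. -/
lemma riccati_aux_blowup (c t₁ : ℝ) (hc0 : 0 < c) (u : ℝ → ℝ)
    (humono : ∀ a b : ℝ, t₁ ≤ a → a ≤ b → u a ≤ u b)
    (hu2 : 2 ≤ u t₁)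
    (key : ∀ s t : ℝ, t₁ ≤ s → s ≤ t → u s + u s ^ 2 * (t - s) / c ≤ u t) :
    False := by
  have hstep : ∀ k : ℕ, (2:ℝ) ^ (k+1) ≤ u (t₁ + 2*c*(1 - (1/2) ^ k)) := by
    intro k
    induction k with
    | zero => simpa using hu2
    | succ k ih =>
      have hq0 : (0:ℝ) < (1/2:ℝ) ^ k := by positivity
      have hq1 : (1/2:ℝ) ^ k ≤ 1 := pow_le_one₀ (by norm_num) (by norm_num)
      have hba : (t₁ + 2*c*(1 - (1/2:ℝ) ^ (k+1))) - (t₁ + 2*c*(1 - (1/2:ℝ) ^ k))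
          = c * (1/2:ℝ) ^ k := by ring
      have hcq : (0:ℝ) < c * (1/2:ℝ) ^ k := mul_pos hc0 hq0
      have ht₁a : t₁ ≤ t₁ + 2*c*(1 - (1/2:ℝ) ^ k) := by nlinarith
      have hab : t₁ + 2*c*(1 - (1/2:ℝ) ^ k) ≤ t₁ + 2*c*(1 - (1/2:ℝ) ^ (k+1)) := by
        linarith
      have hk := key _ _ ht₁a hab
      rw [hba] at hk
      have hpos : (0:ℝ) < 2 ^ (k+1) := by positivity
      have hua : (2:ℝ) ^ (k+1) ≤ u (t₁ + 2*c*(1 - (1/2:ℝ) ^ k)) := ih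
      have hsq2 : ((2:ℝ) ^ (k+1)) ^ 2 ≤ (u (t₁ + 2*c*(1 - (1/2:ℝ) ^ k))) ^ 2 := by
        nlinarith
      have h5 : (u (t₁ + 2*c*(1 - (1/2:ℝ) ^ k))) ^ 2 * (c * (1/2:ℝ) ^ k) / c
          = (u (t₁ + 2*c*(1 - (1/2:ℝ) ^ k))) ^ 2 * (1/2:ℝ) ^ k := by
        field_simp
      have hq : ((2:ℝ) ^ (k+1)) ^ 2 * (1/2:ℝ) ^ k = 2 ^ (k+2) := by
        have h2k : ((2:ℝ) ^ k) ≠ 0 := by positivity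
        have e1 : ((2:ℝ) ^ (k+1)) ^ 2 = 2 ^ (k+2) * 2 ^ k := by
          rw [← pow_mul, ← pow_add]; congr 1; ring
        rw [e1, one_div, inv_pow, mul_assoc, mul_inv_cancel₀ h2k, mul_one]
      have hmul := mul_le_mul_of_nonneg_right hsq2 hq0.le
      have hgoal : (2:ℝ) ^ (k+1+1) = 2 ^ (k+2) := by norm_num
      rw [hgoal]
      linarith
  obtain ⟨k, hk⟩ := pow_unbounded_of_one_lt (u (t₁ + 2*c)) (by norm_num : (1:ℝ) < 2)
  have hq0 : (0:ℝ) < (1/2:ℝ) ^ k := by positivity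
  have hq1 : (1/2:ℝ) ^ k ≤ 1 := pow_le_one₀ (by norm_num) (by norm_num)
  have hle : u (t₁ + 2*c*(1 - (1/2:ℝ) ^ k)) ≤ u (t₁ + 2*c) := by
    apply humono _ _ ?_ ?_
    · nlinarith
    · nlinarith
  have h2 := hstep k
  have h3 : (2:ℝ) ^ k ≤ 2 ^ (k+1) :=
    pow_le_pow_right₀ (by norm_num) (Nat.le_succ k)
  linarith


/-- **No continuous solution of the strong Riccati-type inequality.** For `n ≥ 2`
and `t₁ > 1`, there is no continuous `m : [1,∞) → ℝ` with
`-m(t) - (1/(n-1)) ∫₁ᵗ m(s)² ds ≥ 2` for all `t ≥ t₁`. -/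
theorem no_continuous_solution_riccati_two
    (n : ℕ) (hn : 2 ≤ n) (t₁ : ℝ) (ht₁ : 1 < t₁) :
    ¬ ∃ m : ℝ → ℝ, ContinuousOn m (Set.Ici 1) ∧
      ∀ t ≥ t₁, 2 ≤ -m t - (1 / ((n : ℝ) - 1)) * ∫ s in (1:ℝ)..t, (m s) ^ 2 := by
  rintro ⟨m, hm, hineq⟩
  set c : ℝ := (n : ℝ) - 1 with hc
  have hn2 : (2 : ℝ) ≤ (n : ℝ) := by exact_mod_cast hn
  have hc1 : (1 : ℝ) ≤ c := by rw [hc]; linarith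
  have hc0 : (0 : ℝ) < c := by linarith
  set F : ℝ → ℝ := fun t => ∫ s in (1:ℝ)..t, (m s) ^ 2 with hF
  set u : ℝ → ℝ := fun t => 2 + F t / c with hu
  -- integrability of m² on subintervals of [1, ∞)
  have hint : ∀ a b : ℝ, 1 ≤ a → 1 ≤ b →
      IntervalIntegrable (fun s => (m s) ^ 2) MeasureTheory.volume a b := by
    intro a b ha hb
    apply ContinuousOn.intervalIntegrable
    apply (hm.pow 2).mono
    exact fun x hx => le_trans (le_inf ha hb) hx.1
  -- additivity: F b = F a + ∫_a^b m²
  have hadd : ∀ a b : ℝ, 1 ≤ a → 1 ≤ b →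
      F b = F a + ∫ s in a..b, (m s) ^ 2 := by
    intro a b ha hb
    have h := intervalIntegral.integral_add_adjacent_intervals
      (hint 1 a le_rfl ha) (hint a b ha hb)
    simp only [hF]
    linarith
  -- monotonicity of F on [1, ∞)
  have hFmono : ∀ a b : ℝ, 1 ≤ a → a ≤ b → F a ≤ F b := by
    intro a b ha hab
    rw [hadd a b ha (ha.trans hab)]
    have : 0 ≤ ∫ s in a..b, (m s) ^ 2 :=
      intervalIntegral.integral_nonneg hab (fun x _ => sq_nonneg _)
    linarith
  have hF1 : F 1 = 0 := by simp [hF]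
  have hFnonneg : ∀ a : ℝ, 1 ≤ a → 0 ≤ F a := by
    intro a ha; rw [← hF1]; exact hFmono 1 a le_rfl ha
  have humono : ∀ a b : ℝ, 1 ≤ a → a ≤ b → u a ≤ u b := by
    intro a b ha hab
    have h := hFmono a b ha hab
    simp only [hu]
    gcongr
  have hu2 : ∀ a : ℝ, 1 ≤ a → 2 ≤ u a := by
    intro a ha
    have h1 := hFnonneg a ha
    have h2 : 0 ≤ F a / c := div_nonneg h1 hc0.le
    simp only [hu]; linarith
  -- m x ≤ -u x for x ≥ t₁
  have hmle : ∀ x, t₁ ≤ x → m x ≤ -u x := by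
    intro x hx
    have h := hineq x hx
    have hFx : (∫ s in (1:ℝ)..x, (m s) ^ 2) = F x := rfl
    rw [hFx] at h
    have hcne : c ≠ 0 := ne_of_gt hc0
    have heq : (1 / c) * F x = F x / c := by field_simp
    simp only [hu]
    linarith [h, heq]
  -- pointwise: u² ≤ m² on [t₁, ∞)
  have hsq : ∀ x, t₁ ≤ x → (u x) ^ 2 ≤ (m x) ^ 2 := by
    intro x hx
    have h1 : 1 ≤ x := le_trans ht₁.le hx
    have h2 := hu2 x h1
    have h3 := hmle x hx
    nlinarith
  -- key differential-inequality step
  have key : ∀ s t : ℝ, t₁ ≤ s → s ≤ t → u s + (u s) ^ 2 * (t - s) / c ≤ u t := by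
    intro s t hs hst
    have h1s : 1 ≤ s := ht₁.le.trans hs
    have h1t : 1 ≤ t := h1s.trans hst
    have hFt : F t = F s + ∫ x in s..t, (m x) ^ 2 := hadd s t h1s h1t
    have hmono : ∫ _x in s..t, (u s) ^ 2 ≤ ∫ x in s..t, (m x) ^ 2 := by
      apply intervalIntegral.integral_mono_on hst intervalIntegrable_const (hint s t h1s h1t)
      intro x hx
      have hx1 : t₁ ≤ x := hs.trans hx.1
      calc (u s) ^ 2 ≤ (u x) ^ 2 := by
            have h4 := humono s x h1s hx.1
            have h5 := hu2 s h1s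
            nlinarith
        _ ≤ (m x) ^ 2 := hsq x hx1
    rw [intervalIntegral.integral_const, smul_eq_mul] at hmono
    have h4 : (u s) ^ 2 * (t - s) / c ≤ (∫ x in s..t, (m x) ^ 2) / c := by
      gcongr
      linarith
    have h5 : u t = u s + (∫ x in s..t, (m x) ^ 2) / c := by
      simp only [hu]; rw [hFt]; ring
    linarith
  exact riccati_aux_blowup c t₁ hc0 u
    (fun a b ha hab => humono a b (ht₁.le.trans ha) hab)
    (hu2 t₁ ht₁.le) key
end

section
/- Let n ≥ 2 be an integer, a > 0 a real number, and C ∈ ℝ. There is no continuous function m : [1,∞) → ℝ satisfying −m(t) − (1/(n-1)) ∫₁ᵗ m(s)² ds ≥ a·t + C for all t ≥ 1. -/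
/-- **No continuous solution of the linear-growth Riccati-type inequality.** For
`n ≥ 2`, `a > 0`, `C ∈ ℝ`, there is no continuous `m : [1,∞) → ℝ` with
`-m(t) - (1/(n-1)) ∫₁ᵗ m(s)² ds ≥ a·t + C` for all `t ≥ 1`. -/
theorem no_continuous_solution_riccati_linear
    (n : ℕ) (hn : 2 ≤ n) (a : ℝ) (ha : 0 < a) (C : ℝ) :
    ¬ ∃ m : ℝ → ℝ, ContinuousOn m (Set.Ici 1) ∧
      ∀ t ≥ (1 : ℝ),
        a * t + C ≤ -m t - (1 / ((n : ℝ) - 1)) * ∫ s in (1:ℝ)..t, (m s) ^ 2 := by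
  rintro ⟨m, hm, hineq⟩
  obtain ⟨k, hkdef⟩ : ∃ k : ℝ, k = 1 / ((n : ℝ) - 1) := ⟨_, rfl⟩
  have hn1 : (1 : ℝ) ≤ (n : ℝ) - 1 := by
    have : (2 : ℝ) ≤ (n : ℝ) := by exact_mod_cast hn
    linarith
  have hkpos : 0 < k := by rw [hkdef]; positivity
  obtain ⟨F, hFdef⟩ : ∃ F : ℝ → ℝ, F = fun t => ∫ s in (1:ℝ)..t, (m s) ^ 2 := ⟨_, rfl⟩
  have hm2 : ContinuousOn (fun s => (m s) ^ 2) (Set.Ici 1) := hm.pow 2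
  have hFnonneg : ∀ t ≥ (1:ℝ), 0 ≤ F t := by
    intro t ht
    rw [hFdef]
    apply intervalIntegral.integral_nonneg ht
    intro s _
    positivity
  have hFderiv : ∀ t > (1:ℝ), HasDerivAt F ((m t) ^ 2) t := by
    intro t ht
    have hsub : Set.uIcc (1:ℝ) t ⊆ Set.Ici 1 := by
      rw [Set.uIcc_of_le ht.le]
      exact fun x hx => hx.1
    have hint : IntervalIntegrable (fun s => (m s) ^ 2) MeasureTheory.volume 1 t :=
      (hm2.mono hsub).intervalIntegrable
    have hcontOn : ContinuousOn (fun s => (m s) ^ 2) (Set.Ioi (1:ℝ)) :=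
      hm2.mono Set.Ioi_subset_Ici_self
    have hmeas := hcontOn.stronglyMeasurableAtFilter (μ := MeasureTheory.volume)
      isOpen_Ioi t ht
    have hct : ContinuousAt (fun s => (m s) ^ 2) t :=
      hm2.continuousAt (Ici_mem_nhds ht)
    rw [hFdef]
    exact intervalIntegral.integral_hasDerivAt_right hint hmeas hct
  obtain ⟨T, hTdef⟩ : ∃ T : ℝ, T = max 1 ((1 - C) / a) + 1 := ⟨_, rfl⟩
  have hT1 : (1:ℝ) < T := by
    have := le_max_left (1:ℝ) ((1 - C) / a); rw [hTdef]; linarith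
  have haT : 1 ≤ a * T + C := by
    have h1 : (1 - C) / a ≤ max 1 ((1 - C) / a) := le_max_right _ _
    have h2 : 1 - C ≤ a * max 1 ((1 - C) / a) := by
      rwa [div_le_iff₀ ha, mul_comm] at h1
    rw [hTdef]; nlinarith
  have hkey : ∀ t ≥ T, m t ≤ -(1 + k * F t) := by
    intro t ht
    have ht1 : (1:ℝ) ≤ t := le_trans hT1.le ht
    have h0 := hineq t ht1
    rw [← hkdef] at h0
    have hFt : (∫ s in (1:ℝ)..t, (m s) ^ 2) = F t := by rw [hFdef]
    rw [hFt] at h0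
    have hat : 1 ≤ a * t + C := by nlinarith
    linarith
  obtain ⟨u, hudef⟩ : ∃ u : ℝ → ℝ, u = fun t => k * F t + 1 := ⟨_, rfl⟩
  have hu1 : ∀ t ≥ (1:ℝ), 1 ≤ u t := by
    intro t ht
    have h0 := hFnonneg t ht
    have h1 : 0 ≤ k * F t := by positivity
    rw [hudef]; dsimp; linarith
  obtain ⟨g, hgdef⟩ : ∃ g : ℝ → ℝ, g = fun t => (u t)⁻¹ + k * t := ⟨_, rfl⟩
  have hgderiv : ∀ t > (1:ℝ), HasDerivAt g (-(k * (m t) ^ 2) / (u t) ^ 2 + k) t := by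
    intro t ht
    have hune : u t ≠ 0 := by
      have := hu1 t ht.le; linarith
    have h1 : HasDerivAt u (k * (m t) ^ 2) t := by
      rw [hudef]
      simpa using ((hFderiv t ht).const_mul k).add_const 1
    have h2 : HasDerivAt (fun s => (u s)⁻¹) (-(k * (m t) ^ 2) / (u t) ^ 2) t := h1.inv hune
    rw [hgdef]
    have h3 := h2.add ((hasDerivAt_id' t).const_mul k)
    simp only [mul_one] at h3
    exact h3
  obtain ⟨t₁, ht₁def⟩ : ∃ t₁ : ℝ, t₁ = T + 2 / k := ⟨_, rfl⟩
  have hTt₁ : T < t₁ := by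
    have : 0 < 2 / k := by positivity
    rw [ht₁def]; linarith
  have hanti : AntitoneOn g (Set.Icc T t₁) := by
    apply antitoneOn_of_deriv_nonpos (convex_Icc T t₁)
    · intro t ht
      have ht' : (1:ℝ) < t := lt_of_lt_of_le hT1 ht.1
      exact (hgderiv t ht').continuousAt.continuousWithinAt
    · intro t ht
      rw [interior_Icc] at ht
      have ht' : (1:ℝ) < t := lt_of_lt_of_le hT1 ht.1.le
      exact (hgderiv t ht').differentiableAt.differentiableWithinAt
    · intro t ht
      rw [interior_Icc] at ht
      have ht' : (1:ℝ) < t := lt_of_lt_of_le hT1 ht.1.le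
      rw [(hgderiv t ht').deriv]
      have hmle := hkey t ht.1.le
      have hu1t := hu1 t ht'.le
      have hut : u t = k * F t + 1 := by rw [hudef]
      have h' : u t ≤ -m t := by rw [hut]; linarith
      have husq : (u t) ^ 2 ≤ (m t) ^ 2 := by nlinarith
      have hupos : 0 < (u t) ^ 2 := by nlinarith
      rw [div_add' _ _ _ (ne_of_gt hupos), div_nonpos_iff]
      right
      exact ⟨by nlinarith, by linarith⟩
  have hgineq : g t₁ ≤ g T := hanti (Set.left_mem_Icc.2 hTt₁.le)
    (Set.right_mem_Icc.2 hTt₁.le) hTt₁.le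
  have huT := hu1 T hT1.le
  have hut₁ := hu1 t₁ (lt_of_lt_of_le hT1 hTt₁.le).le
  have h1 : (u t₁)⁻¹ > 0 := by positivity
  have h2 : (u T)⁻¹ ≤ 1 := by
    rw [inv_le_one_iff₀]; right; exact huT
  have hkt : k * t₁ = k * T + 2 := by
    rw [ht₁def]; field_simp
  have hgt₁ : g t₁ = (u t₁)⁻¹ + k * t₁ := by rw [hgdef]
  have hgT : g T = (u T)⁻¹ + k * T := by rw [hgdef]
  rw [hgt₁, hgT, hkt] at hgineq
  linarith
end
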